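/- Let R be a commutative ring with identity, M an R-module, and N a proper submodule of M. Then N is a strongly 2-irreducible submodule of M if and only if for all elements x, y, z of M, (Rx + Ry) ∩ (Rx + Rz) ∩ (Ry + Rz) ⊆ N implies that (Rx + Ry) ∩ (Rx + Rz) ⊆ N or (Rx + Ry) ∩ (Ry + Rz) ⊆ N or (Rx + Rz) ∩ (Ry + Rz) ⊆ N. -/
import Mathlib


def IsStrongly2Irreducible {R M : Type*} [CommRing R] [AddCommGroup M] [Module R M]
    (N : Submodule R M) : Prop :=
  N ≠ ⊤ ∧ ∀ H₁ H₂ H₃ : Submodule R M, H₁ ⊓ H₂ ⊓ H₃ ≤ N →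
    H₁ ⊓ H₂ ≤ N ∨ H₁ ⊓ H₃ ≤ N ∨ H₂ ⊓ H₃ ≤ N

theorem stmt_3 {R M : Type*} [CommRing R] [AddCommGroup M] [Module R M]
    (N : Submodule R M) (hN : N ≠ ⊤) :
    IsStrongly2Irreducible N ↔
      ∀ x y z : M,
        ((R ∙ x) ⊔ (R ∙ y)) ⊓ ((R ∙ x) ⊔ (R ∙ z)) ⊓ ((R ∙ y) ⊔ (R ∙ z)) ≤ N →
          ((R ∙ x) ⊔ (R ∙ y)) ⊓ ((R ∙ x) ⊔ (R ∙ z)) ≤ N ∨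
          ((R ∙ x) ⊔ (R ∙ y)) ⊓ ((R ∙ y) ⊔ (R ∙ z)) ≤ N ∨
          ((R ∙ x) ⊔ (R ∙ z)) ⊓ ((R ∙ y) ⊔ (R ∙ z)) ≤ N := by
  constructor
  · rintro ⟨-, h⟩ x y z hle
    exact h _ _ _ hle
  · intro h
    refine ⟨hN, fun H₁ H₂ H₃ hle => ?_⟩
    by_contra hc
    push_neg at hc
    obtain ⟨h12, h13, h23⟩ := hc
    rw [SetLike.not_le_iff_exists] at h12 h13 h23
    obtain ⟨x, hx, hxN⟩ := h12
    obtain ⟨y, hy, hyN⟩ := h13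
    obtain ⟨z, hz, hzN⟩ := h23
    have hxy : (R ∙ x) ⊔ (R ∙ y) ≤ H₁ :=
      sup_le ((Submodule.span_singleton_le_iff_mem _ _).2 hx.1)
        ((Submodule.span_singleton_le_iff_mem _ _).2 hy.1)
    have hxz : (R ∙ x) ⊔ (R ∙ z) ≤ H₂ :=
      sup_le ((Submodule.span_singleton_le_iff_mem _ _).2 hx.2)
        ((Submodule.span_singleton_le_iff_mem _ _).2 hz.1)
    have hyz : (R ∙ y) ⊔ (R ∙ z) ≤ H₃ :=
      sup_le ((Submodule.span_singleton_le_iff_mem _ _).2 hy.2)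
        ((Submodule.span_singleton_le_iff_mem _ _).2 hz.2)
    have := h x y z (le_trans (inf_le_inf (inf_le_inf hxy hxz) hyz) hle)
    have hxm : x ∈ (R ∙ x) := Submodule.mem_span_singleton_self x
    have hym : y ∈ (R ∙ y) := Submodule.mem_span_singleton_self y
    have hzm : z ∈ (R ∙ z) := Submodule.mem_span_singleton_self z
    rcases this with h' | h' | h'
    · exact hxN (h' ⟨Submodule.mem_sup_left hxm, Submodule.mem_sup_left hxm⟩)
    · exact hyN (h' ⟨Submodule.mem_sup_right hym, Submodule.mem_sup_left hym⟩)
    · exact hzN (h' ⟨Submodule.mem_sup_right hzm, Submodule.mem_sup_right hzm⟩)
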